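/- For every odd m > 3 there exists an instance of proxy selection with n = m−1 voters and m proposals, with reluctance parameter k_i ≥ 1 for all voters, such that for every possible advertised type of a single dRep, the elected proposal has intrinsic score at most 2 while the optimal intrinsic score is n; consequently, a single dRep cannot achieve an approximation ratio better than n/2 when k > 0. -/

import Mathlib

open Finset

/-- An instance of proxy selection: `intrinsic i j` is voter `i`'s intrinsic approval of
proposal `j`; `visible i j` records whether this preference is revealed to the voter
(the revealed preference is `some (intrinsic i j)` if visible and `⊥` otherwise). -/
structure PSInstance (n m : ℕ) where
  intrinsic : Fin n → Fin m → Bool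
  visible : Fin n → Fin m → Bool

namespace PSInstance

variable {n m : ℕ}

/-- Revealed preference of voter `i` on proposal `j`. -/
def revealed (I : PSInstance n m) (i : Fin n) (j : Fin m) : Option Bool :=
  if I.visible i j then some (I.intrinsic i j) else none

/-- The revealed set `R_i` of voter `i`. -/
def Rset (I : PSInstance n m) (i : Fin n) : Finset (Fin m) :=
  univ.filter fun j => I.visible i j

/-- `m_i = |R_i|`. -/
def mi (I : PSInstance n m) (i : Fin n) : ℕ := (I.Rset i).card

/-- Hamming distance between voter `i`'s revealed ballot and type `t`, restricted to `R_i`. -/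
def dist (I : PSInstance n m) (i : Fin n) (t : Fin m → Bool) : ℕ :=
  (univ.filter fun j => I.visible i j ∧ I.intrinsic i j ≠ t j).card

/-- Voter `i` (with reluctance parameter `k`) is attracted by a dRep of type `t`. -/
def Attracted (I : PSInstance n m) (k : ℕ) (i : Fin n) (t : Fin m → Bool) : Prop :=
  I.dist i t ≤ (I.mi i - k) / 2

instance (I : PSInstance n m) (k : ℕ) (i : Fin n) (t : Fin m → Bool) :
    Decidable (I.Attracted k i t) := by unfold Attracted; exact inferInstance

/-- Intrinsic approval score of proposal `j`. -/
def sc (I : PSInstance n m) (j : Fin m) : ℕ :=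
  (univ.filter fun i => I.intrinsic i j = true).card

/-- Revealed approval score of proposal `j`. -/
def rsc (I : PSInstance n m) (j : Fin m) : ℕ :=
  (univ.filter fun i => I.visible i j ∧ I.intrinsic i j = true).card

/-- `j` is an intrinsically optimal proposal (`win(P)`). -/
def IsOpt (I : PSInstance n m) (j : Fin m) : Prop := ∀ j', I.sc j' ≤ I.sc j

/-- Total score of proposal `j` given a family `D` of dReps and a delegation assignment
`deleg` (delegating voters contribute through their dRep's ballot, the rest vote their
revealed preferences directly). -/
def totalScore {ι : Type} (I : PSInstance n m) (D : ι → Fin m → Bool)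
    (deleg : Fin n → Option ι) (j : Fin m) : ℕ :=
  (univ.filter fun i => (match deleg i with
    | some d => D d j
    | none => I.visible i j && I.intrinsic i j) = true).card

/-- A delegation assignment is valid (w.r.t. per-voter reluctance parameters `k`) if every
delegating voter is attracted by their chosen dRep, and every voter attracted by at least
one dRep delegates (to an arbitrary one of them). -/
def ValidDeleg {ι : Type} (I : PSInstance n m) (k : Fin n → ℕ) (D : ι → Fin m → Bool)
    (deleg : Fin n → Option ι) : Prop :=
  (∀ i d, deleg i = some d → I.Attracted (k i) i (D d)) ∧
  (∀ i, (∃ d, I.Attracted (k i) i (D d)) → deleg i ≠ none)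

/-- `j` is elected: it maximizes total score, ties broken in favor of maximum intrinsic score. -/
def Elected {ι : Type} (I : PSInstance n m) (D : ι → Fin m → Bool)
    (deleg : Fin n → Option ι) (j : Fin m) : Prop :=
  (∀ j', I.totalScore D deleg j' ≤ I.totalScore D deleg j) ∧
  (∀ j', I.totalScore D deleg j' = I.totalScore D deleg j → I.sc j' ≤ I.sc j)

/-- `j` is elected when ties are broken in favor of maximum *revealed* score. -/
def ElectedRev {ι : Type} (I : PSInstance n m) (D : ι → Fin m → Bool)
    (deleg : Fin n → Option ι) (j : Fin m) : Prop :=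
  (∀ j', I.totalScore D deleg j' ≤ I.totalScore D deleg j) ∧
  (∀ j', I.totalScore D deleg j' = I.totalScore D deleg j → I.rsc j' ≤ I.rsc j)

end PSInstance

/-- Hidden-approval instance: every voter secretly approves proposal `m-1`; proposals
`0,…,m-2` are paired as `{2c,2c+1}`; voter `2c` reveals approval of both, voter `2c+1`
reveals approval of `2c` and disapproval of `2c+1`. -/
def hardIntr (m : ℕ) (i : Fin (m-1)) (j : Fin m) : Bool :=
  decide (j.val = m - 1 ∨ j.val = 2 * (i.val / 2) ∨
    (j.val = 2 * (i.val / 2) + 1 ∧ i.val % 2 = 0))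

def hardVis (m : ℕ) (i : Fin (m-1)) (j : Fin m) : Bool :=
  decide (j.val = 2 * (i.val / 2) ∨ j.val = 2 * (i.val / 2) + 1)

def hardInst (m : ℕ) : PSInstance (m-1) m := ⟨hardIntr m, hardVis m⟩

@[simp] lemma hardInst_intrinsic (m : ℕ) : (hardInst m).intrinsic = hardIntr m := rfl
@[simp] lemma hardInst_visible (m : ℕ) : (hardInst m).visible = hardVis m := rfl

lemma hardInst_mi (m : ℕ) (i : Fin (m-1)) : (hardInst m).mi i = 2 := by
  have hilt := i.isLt
  have hm1 : 1 ≤ m - 1 := by omega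
  have ha : 2 * (i.val / 2) < m := by omega
  have hb : 2 * (i.val / 2) + 1 < m := by omega
  have hset : (hardInst m).Rset i =
      {⟨2 * (i.val / 2), ha⟩, ⟨2 * (i.val / 2) + 1, hb⟩} := by
    ext jj
    simp only [PSInstance.Rset, hardInst_visible, hardVis, Finset.mem_filter,
      Finset.mem_univ, true_and, decide_eq_true_eq, Finset.mem_insert,
      Finset.mem_singleton, Fin.ext_iff]
  rw [PSInstance.mi, hset,
    Finset.card_insert_of_notMem (by simp only [Finset.mem_singleton, Fin.ext_iff]; omega),
    Finset.card_singleton]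

/-- For every odd `m > 3` there is an instance with `n = m - 1` voters and
`m` proposals such that for any reluctance parameters `k_i ≥ 1` and any single dRep, the
elected proposal has intrinsic score at most 2 while the optimal intrinsic score is `n`. -/
theorem stmt1 (m : ℕ) (hm : 3 < m) (hodd : Odd m) :
    ∃ I : PSInstance (m - 1) m,
      (∃ j, I.IsOpt j ∧ I.sc j = m - 1) ∧
      ∀ k : Fin (m - 1) → ℕ, (∀ i, 1 ≤ k i) →
        ∀ t : Fin m → Bool, ∀ deleg : Fin (m - 1) → Option Unit,
          I.ValidDeleg k (fun _ => t) deleg →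
          ∀ j, I.Elected (fun _ => t) deleg j → I.sc j ≤ 2 := by
  obtain ⟨r, hr⟩ := hodd
  have hm1 : m - 1 < m := by omega
  have hn4 : 4 ≤ m - 1 := by omega
  refine ⟨hardInst m, ⟨⟨m-1, hm1⟩, ?_, ?_⟩, ?_⟩
  · intro j'
    calc (hardInst m).sc j' ≤ (Finset.univ : Finset (Fin (m-1))).card :=
          Finset.card_filter_le _ _
      _ = (hardInst m).sc ⟨m-1, hm1⟩ := by
          rw [PSInstance.sc, Finset.filter_true_of_mem, Finset.card_univ]
          intro i _
          simp only [hardInst_intrinsic, hardIntr, decide_eq_true_eq]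
          exact Or.inl trivial
  · rw [PSInstance.sc, Finset.filter_true_of_mem, Finset.card_univ, Fintype.card_fin]
    intro i _
    simp only [hardInst_intrinsic, hardIntr, decide_eq_true_eq]
    exact Or.inl trivial
  · intro k hk t deleg hvd j hel
    -- every attracted voter agrees with t on its two visible proposals
    have hattr : ∀ i : Fin (m-1), (hardInst m).Attracted (k i) i t → ∀ jj : Fin m,
        (jj.val = 2 * (i.val / 2) → t jj = true) ∧
        (jj.val = 2 * (i.val / 2) + 1 → t jj = decide (i.val % 2 = 0)) := by
      intro i hA jj
      have hd0 : (hardInst m).dist i t = 0 := by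
        have h1 := hardInst_mi m i
        have h2 := hk i
        rw [PSInstance.Attracted] at hA
        omega
      have hall : ∀ jj : Fin m, (hardInst m).visible i jj = true →
          (hardInst m).intrinsic i jj = t jj := by
        intro jj hv
        by_contra hne
        rw [PSInstance.dist, Finset.card_eq_zero] at hd0
        have hnm := Finset.eq_empty_iff_forall_notMem.mp hd0 jj
        simp only [Finset.mem_filter, Finset.mem_univ, true_and, not_and, ne_eq,
          not_not] at hnm
        exact hne (hnm hv)
      have hilt := i.isLt
      constructor
      · intro hjj
        have hv : (hardInst m).visible i jj = true := by
          simp only [hardInst_visible, hardVis, decide_eq_true_eq]; omega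
        have hi : (hardInst m).intrinsic i jj = true := by
          simp only [hardInst_intrinsic, hardIntr, decide_eq_true_eq]; omega
        rw [← hall jj hv, hi]
      · intro hjj
        have hv : (hardInst m).visible i jj = true := by
          simp only [hardInst_visible, hardVis, decide_eq_true_eq]; omega
        rw [← hall jj hv]
        simp only [hardInst_intrinsic, hardIntr]
        rw [decide_eq_decide]
        omega
    have hvism1 : ∀ i : Fin (m-1), (hardInst m).visible i ⟨m-1, hm1⟩ = false := by
      intro i
      have hilt := i.isLt
      simp only [hardInst_visible, hardVis, decide_eq_false_iff_not]
      omega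
    have htot : ∀ jj : Fin m, (hardInst m).totalScore (fun _ : Unit => t) deleg jj =
        (Finset.univ.filter fun i : Fin (m-1) =>
          if deleg i = none
          then ((hardInst m).visible i jj && (hardInst m).intrinsic i jj) = true
          else t jj = true).card := by
      intro jj
      rw [PSInstance.totalScore]
      congr 1
      apply Finset.filter_congr
      intro i _
      cases hdi : deleg i with
      | none => simp
      | some d => simp
    by_cases hj : j.val = m - 1
    · exfalso
      have hjm : j = ⟨m-1, hm1⟩ := Fin.ext hj
      subst hjm
      by_cases hdel : ∃ i d, deleg i = some d
      · obtain ⟨i0, d0, hd0⟩ := hdel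
        have hA0 : (hardInst m).Attracted (k i0) i0 t := hvd.1 i0 d0 hd0
        have hilt0 := i0.isLt
        have hplt : 2 * (i0.val / 2) < m := by omega
        have ht0 : t ⟨2 * (i0.val / 2), hplt⟩ = true := (hattr i0 hA0 _).1 rfl
        -- the partner voter
        obtain ⟨qv, hq1, hq2, hqlt⟩ : ∃ qv, qv / 2 = i0.val / 2 ∧
            qv % 2 ≠ i0.val % 2 ∧ qv < m - 1 := by
          rcases Nat.mod_two_eq_zero_or_one i0.val with h | h
          · exact ⟨i0.val + 1, by omega, by omega, by omega⟩
          · exact ⟨i0.val - 1, by omega, by omega, by omega⟩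
        set q : Fin (m-1) := ⟨qv, hqlt⟩ with hqdef
        have hqval : (q : ℕ) = qv := rfl
        have hqnone : deleg q = none := by
          cases hdq : deleg q with
          | none => rfl
          | some d =>
            exfalso
            have hAq : (hardInst m).Attracted (k q) q t := hvd.1 q d hdq
            have hb1 : 2 * (i0.val / 2) + 1 < m := by omega
            have h1 : t ⟨2 * (i0.val / 2) + 1, hb1⟩ = decide (i0.val % 2 = 0) :=
              (hattr i0 hA0 _).2 rfl
            have h2 : t ⟨2 * (i0.val / 2) + 1, hb1⟩ = decide (q.val % 2 = 0) :=
              (hattr q hAq _).2 (by show 2 * (i0.val / 2) + 1 = 2 * (qv / 2) + 1; omega)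
            have h3 : decide (i0.val % 2 = 0) = decide (q.val % 2 = 0) := by
              rw [← h1, ← h2]
            rw [decide_eq_decide, hqval] at h3
            omega
        have hlt : (hardInst m).totalScore (fun _ : Unit => t) deleg ⟨m-1, hm1⟩ <
            (hardInst m).totalScore (fun _ : Unit => t) deleg ⟨2 * (i0.val / 2), hplt⟩ := by
          rw [htot, htot]
          apply Finset.card_lt_card
          rw [Finset.ssubset_def]
          constructor
          · intro i hi
            simp only [Finset.mem_filter, Finset.mem_univ, true_and] at hi ⊢
            by_cases hdi : deleg i = none
            · rw [if_pos hdi, hvism1 i, Bool.false_and] at hi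
              exact absurd hi (by simp)
            · rw [if_neg hdi]
              exact ht0
          · intro hsup
            have hqin : q ∈ Finset.univ.filter fun i : Fin (m-1) =>
                if deleg i = none
                then ((hardInst m).visible i ⟨2 * (i0.val / 2), hplt⟩ &&
                    (hardInst m).intrinsic i ⟨2 * (i0.val / 2), hplt⟩) = true
                else t ⟨2 * (i0.val / 2), hplt⟩ = true := by
              rw [Finset.mem_filter]
              refine ⟨Finset.mem_univ _, ?_⟩
              rw [if_pos hqnone]
              simp only [hardInst_visible, hardVis, hardInst_intrinsic, hardIntr,
                Bool.and_eq_true, decide_eq_true_eq, hqval]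
              exact ⟨Or.inl (by omega), Or.inr (Or.inl (by omega))⟩
            have hqm := (Finset.mem_filter.mp (hsup hqin)).2
            rw [if_pos hqnone, hvism1 q, Bool.false_and] at hqm
            exact absurd hqm (by simp)
        have := hel.1 ⟨2 * (i0.val / 2), hplt⟩
        omega
      · push_neg at hdel
        have h0m : (0 : ℕ) < m := by omega
        have h0n : (0 : ℕ) < m - 1 := by omega
        have hz : (hardInst m).totalScore (fun _ : Unit => t) deleg ⟨m-1, hm1⟩ = 0 := by
          rw [htot, Finset.card_eq_zero, Finset.filter_eq_empty_iff]
          intro i _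
          have hdi : deleg i = none := by
            cases h : deleg i with
            | none => rfl
            | some d => exact absurd h (hdel i d)
          rw [if_pos hdi, hvism1 i, Bool.false_and]
          simp
        have hpos : 0 < (hardInst m).totalScore (fun _ : Unit => t) deleg ⟨0, h0m⟩ := by
          rw [htot, Finset.card_pos]
          refine ⟨⟨0, h0n⟩, Finset.mem_filter.mpr ⟨Finset.mem_univ _, ?_⟩⟩
          have hdi : deleg (⟨0, h0n⟩ : Fin (m-1)) = none := by
            cases h : deleg (⟨0, h0n⟩ : Fin (m-1)) with
            | none => rfl
            | some d => exact absurd h (hdel _ d)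
          rw [if_pos hdi]
          simp only [hardInst_visible, hardVis, hardInst_intrinsic, hardIntr,
            Bool.and_eq_true, decide_eq_true_eq]
          exact ⟨Or.inl trivial, Or.inr (Or.inl trivial)⟩
        have := hel.1 ⟨0, h0m⟩
        omega
    · -- j is not the hidden proposal, so its intrinsic score is at most 2
      have hjlt := j.isLt
      rw [PSInstance.sc]
      calc (Finset.univ.filter fun i : Fin (m-1) =>
              (hardInst m).intrinsic i j = true).card
          ≤ (Finset.univ.filter fun i : Fin (m-1) =>
              i.val = 2 * (j.val / 2) ∨ i.val = 2 * (j.val / 2) + 1).card := by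
            apply Finset.card_le_card
            intro i hi
            simp only [Finset.mem_filter, Finset.mem_univ, true_and,
              hardInst_intrinsic, hardIntr, decide_eq_true_eq] at hi ⊢
            omega
        _ ≤ ({2 * (j.val / 2), 2 * (j.val / 2) + 1} : Finset ℕ).card := by
            apply Finset.card_le_card_of_injOn Fin.val
            · intro x hx
              simp only [Finset.mem_coe, Finset.mem_filter, Finset.mem_univ, true_and] at hx
              simp only [Finset.mem_coe, Finset.mem_insert, Finset.mem_singleton]
              exact hx
            · intro a _ b _ h
              exact Fin.val_injective h
        _ ≤ 2 := by
            apply le_trans (Finset.card_insert_le _ _)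
            simp
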